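/- Let A and B₁ be as follows: A ∈ (ℚ[t])⟦q⟧ has coefficient of qⁿtᵏ equal to the number of column-convex hexagonal-celled polyominoes with area n whose last column has height k, and B₁ = (∂A/∂t)(q,1) ∈ ℚ⟦q⟧. Let A_γ ∈ (ℚ[t])⟦q⟧ be the series whose coefficient of qⁿtᵏ is the number of column-convex polyominoes with area n and at least two columns whose last column has height k and which do NOT contain their pivot cell. Then (1 − qt) · A_γ = qt · B₁ (equivalently, A_γ = qt/(1−qt) · B₁). -/

import Mathlib

open Finset Filter

noncomputable section

/-- A cell of the hexagonal lattice, modelled as a point of ℤ². -/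
abbrev Cell : Type := ℤ × ℤ

/-- Hexagonal adjacency on ℤ². -/
def HexAdj (a b : Cell) : Prop :=
  (b.1 - a.1, b.2 - a.2) ∈
    ({(1,0), (-1,0), (0,1), (0,-1), (1,1), (-1,-1)} : Set (ℤ × ℤ))

/-- A (hexagonal-celled) polyomino: a finite nonempty set of cells,
connected under hexagonal adjacency. -/
def IsPolyomino (P : Finset Cell) : Prop :=
  P.Nonempty ∧ ∀ a ∈ P, ∀ b ∈ P,
    Relation.ReflTransGen (fun u v : Cell => u ∈ P ∧ v ∈ P ∧ HexAdj u v) a b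

/-- The canonical representative of a translation class: both the minimal
abscissa and the minimal ordinate are `0`. -/
def Normalized (P : Finset Cell) : Prop :=
  (∀ c ∈ P, 0 ≤ c.1 ∧ 0 ≤ c.2) ∧ (∃ c ∈ P, c.1 = 0) ∧ (∃ c ∈ P, c.2 = 0)

/-- Ordinates of the cells of the column of `P` at abscissa `x`. -/
def columnYs (P : Finset Cell) (x : ℤ) : Finset ℤ :=
  (P.filter (fun c => c.1 = x)).image Prod.snd

/-- Number of connected components (maximal runs of consecutive integers) of a
finite set of integers: each component is counted via its least element. -/
def numComponents (s : Finset ℤ) : ℕ := (s.filter (fun a => a - 1 ∉ s)).card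

/-- Every nonempty column has exactly one connected component. -/
def ColumnConvex (P : Finset Cell) : Prop :=
  ∀ x : ℤ, (columnYs P x).Nonempty → numComponents (columnYs P x) = 1

/-- `a` and `b` lie in the same connected component of `s`. -/
def SameComp (s : Finset ℤ) (a b : ℤ) : Prop :=
  a ∈ s ∧ b ∈ s ∧ ∀ c : ℤ, min a b ≤ c → c ≤ max a b → c ∈ s

/-- The leftmost nonempty column has exactly one connected component and, for
every pair of nonempty columns at consecutive abscissas `x`, `x+1`, every
connected component of the column at `x+1` contains a cell adjacent to some
cell of the column at `x`. -/
def RightwardSemiDirected (P : Finset Cell) : Prop :=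
  (∀ x : ℤ, (columnYs P x).Nonempty → (∀ x' : ℤ, x' < x → columnYs P x' = ∅) →
      numComponents (columnYs P x) = 1) ∧
  (∀ x : ℤ, (columnYs P x).Nonempty → (columnYs P (x+1)).Nonempty →
      ∀ b ∈ columnYs P (x+1), ∃ b' ∈ columnYs P (x+1),
        SameComp (columnYs P (x+1)) b b' ∧
        ∃ c ∈ columnYs P x, HexAdj (x, c) (x+1, b'))

/-- The cells of the gap(s) of a column: the integers between the least and the
greatest element that do not belong to the column. -/
def gapCells (s : Finset ℤ) : Finset ℤ :=
  Finset.Icc (WithTop.untopD 0 s.min) (WithBot.unbotD 0 s.max) \ s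

def gapSize (s : Finset ℤ) : ℕ := (gapCells s).card

/-- Level `m` cheesy polyomino. -/
def IsCheesy (m : ℕ) (P : Finset Cell) : Prop :=
  IsPolyomino P ∧ RightwardSemiDirected P ∧
  ∀ x : ℤ, numComponents (columnYs P x) ≤ 2 ∧
    (numComponents (columnYs P x) = 2 → gapSize (columnYs P x) ≤ m)

/-- Height of a (nonempty) column: max − min + 1. -/
def heightN (s : Finset ℤ) : ℕ :=
  (WithBot.unbotD 0 s.max - WithTop.untopD 0 s.min + 1).toNat

/-- The maximal abscissa of a polyomino. -/
def maxX (P : Finset Cell) : ℤ := WithBot.unbotD 0 (P.image Prod.fst).max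

/-- The last column (ordinates of the column of maximal abscissa). -/
def lastCol (P : Finset Cell) : Finset ℤ := columnYs P (maxX P)

/-- Number of column-convex polyominoes with area `n` whose last column has
height `k`, counted up to translation. -/
def ccCountHt (n k : ℕ) : ℕ :=
  Nat.card {P : Finset Cell // IsPolyomino P ∧ ColumnConvex P ∧ Normalized P ∧
    P.card = n ∧ heightN (lastCol P) = k}

/-- The area and last column generating function `A ∈ (ℚ[t])⟦q⟧` of
column-convex polyominoes: the coefficient of `qⁿtᵏ` is `ccCountHt n k`
(the height of the last column never exceeds the area). -/
def Aser : PowerSeries (Polynomial ℚ) :=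
  PowerSeries.mk fun n =>
    ∑ k ∈ Finset.range (n + 1), Polynomial.C (ccCountHt n k : ℚ) * Polynomial.X ^ k

/-- `A₁ = A(q,1)`. -/
def A1 : PowerSeries ℚ :=
  PowerSeries.mk fun n => Polynomial.eval 1 (PowerSeries.coeff n Aser)

/-- `B₁ = (∂A/∂t)(q,1)`. -/
def B1 : PowerSeries ℚ :=
  PowerSeries.mk fun n =>
    Polynomial.eval 1 (Polynomial.derivative (PowerSeries.coeff n Aser))

/-- Embedding of `ℚ⟦q⟧` into `(ℚ[t])⟦q⟧`. -/
def liftP : PowerSeries ℚ →+* PowerSeries (Polynomial ℚ) :=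
  PowerSeries.map (Polynomial.C : ℚ →+* Polynomial ℚ)

/-- The variable `q` of `(ℚ[t])⟦q⟧`. -/
def qp : PowerSeries (Polynomial ℚ) := PowerSeries.X

/-- The variable `t` of `(ℚ[t])⟦q⟧`. -/
def tp : PowerSeries (Polynomial ℚ) := PowerSeries.C Polynomial.X

/-- Number of column-convex polyominoes with area `n` and at least two columns,
whose last column has height `k`, and which do not contain their pivot cell
(the lower right neighbour of the lowest cell of the second-last column). -/
def ccGammaCount (n k : ℕ) : ℕ :=
  Nat.card {P : Finset Cell // IsPolyomino P ∧ ColumnConvex P ∧ Normalized P ∧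
    P.card = n ∧ 2 ≤ (P.image Prod.fst).card ∧ heightN (lastCol P) = k ∧
    (maxX P, WithTop.untopD 0 (columnYs P (maxX P - 1)).min) ∉ P}

/-- The generating function `A_γ` of column-convex polyominoes not containing
their pivot cell. -/
def Agamma : PowerSeries (Polynomial ℚ) :=
  PowerSeries.mk fun n =>
    ∑ k ∈ Finset.range (n + 1), Polynomial.C (ccGammaCount n k : ℚ) * Polynomial.X ^ k

section Basics

lemma hexAdj_symm {a b : Cell} (h : HexAdj a b) : HexAdj b a := by
  simp only [HexAdj, Set.mem_insert_iff, Set.mem_singleton_iff, Prod.mk.injEq] at h ⊢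
  omega

lemma hexAdj_fst {a b : Cell} (h : HexAdj a b) : b.1 ≤ a.1 + 1 ∧ a.1 ≤ b.1 + 1 := by
  simp only [HexAdj, Set.mem_insert_iff, Set.mem_singleton_iff, Prod.mk.injEq] at h
  omega

lemma hexAdj_snd {a b : Cell} (h : HexAdj a b) : b.2 ≤ a.2 + 1 ∧ a.2 ≤ b.2 + 1 := by
  simp only [HexAdj, Set.mem_insert_iff, Set.mem_singleton_iff, Prod.mk.injEq] at h
  omega

lemma hexAdj_step {a b : Cell} (h : HexAdj a b) (h1 : b.1 = a.1 + 1) :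
    b.2 = a.2 ∨ b.2 = a.2 + 1 := by
  simp only [HexAdj, Set.mem_insert_iff, Set.mem_singleton_iff, Prod.mk.injEq] at h
  omega

lemma hexAdj_up (x y : ℤ) : HexAdj (x, y) (x, y + 1) := by
  simp [HexAdj]

lemma hexAdj_diag (x y : ℤ) : HexAdj (x, y) (x + 1, y + 1) := by
  simp [HexAdj]

lemma mem_columnYs {P : Finset Cell} {x y : ℤ} : y ∈ columnYs P x ↔ (x, y) ∈ P := by
  simp only [columnYs, Finset.mem_image, Finset.mem_filter]
  constructor
  · rintro ⟨⟨cx, cy⟩, ⟨hc, rfl⟩, rfl⟩; exact hc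
  · intro h; exact ⟨(x, y), ⟨h, rfl⟩, rfl⟩

lemma mem_of_numComponents_one {s : Finset ℤ} (hs : s.Nonempty) (h1 : numComponents s = 1)
    {c : ℤ} (hc1 : s.min' hs ≤ c) (hc2 : c ≤ s.max' hs) : c ∈ s := by
  by_contra hc
  have hmin : s.min' hs ∈ s.filter (fun a => a - 1 ∉ s) := by
    simp only [Finset.mem_filter]
    exact ⟨s.min'_mem hs, fun h => by have := s.min'_le _ h; omega⟩
  have hne : (s.filter (fun a => c < a)).Nonempty := ⟨s.max' hs, by
    simp only [Finset.mem_filter]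
    exact ⟨s.max'_mem hs, lt_of_le_of_ne hc2 (fun h => hc (h ▸ s.max'_mem hs))⟩⟩
  set u := (s.filter (fun a => c < a)).min' hne with hu
  have hus : u ∈ s ∧ c < u := by
    have h' := Finset.mem_filter.mp (Finset.min'_mem _ hne)
    exact ⟨h'.1, h'.2⟩
  have hu1 : u - 1 ∉ s := by
    intro h
    rcases lt_trichotomy (u - 1) c with h' | h' | h'
    · omega
    · exact hc (h' ▸ h)
    · have := Finset.min'_le _ (u - 1) ((Finset.mem_filter.mpr ⟨h, h'⟩ : u - 1 ∈ s.filter (fun a => c < a)))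
      omega
  have huf : u ∈ s.filter (fun a => a - 1 ∉ s) := by
    simp only [Finset.mem_filter]; exact ⟨hus.1, hu1⟩
  have hne2 : u ≠ s.min' hs := by
    intro h; rw [h] at hus; exact absurd hus.2 (not_lt.mpr hc1)
  have : 1 < (s.filter (fun a => a - 1 ∉ s)).card :=
    Finset.one_lt_card.mpr ⟨u, huf, s.min' hs, hmin, hne2⟩
  rw [numComponents] at h1; omega

end Basics

section Basics2

lemma numComponents_Icc {a b : ℤ} (h : a ≤ b) : numComponents (Finset.Icc a b) = 1 := by
  have : (Finset.Icc a b).filter (fun x => x - 1 ∉ Finset.Icc a b) = {a} := by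
    ext x
    simp only [Finset.mem_filter, Finset.mem_Icc, Finset.mem_singleton]
    omega
  rw [numComponents, this, Finset.card_singleton]

lemma col_eq_Icc {s : Finset ℤ} (hs : s.Nonempty) (h1 : numComponents s = 1) :
    s = Finset.Icc (s.min' hs) (s.max' hs) := by
  ext c
  simp only [Finset.mem_Icc]
  exact ⟨fun h => ⟨s.min'_le c h, s.le_max' c h⟩,
    fun h => mem_of_numComponents_one hs h1 h.1 h.2⟩

lemma untop'_min {s : Finset ℤ} (hs : s.Nonempty) : WithTop.untopD 0 s.min = s.min' hs := by
  rw [← Finset.coe_min' hs]; rfl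

lemma unbot'_max {s : Finset ℤ} (hs : s.Nonempty) : WithBot.unbotD 0 s.max = s.max' hs := by
  rw [← Finset.coe_max' hs]; rfl

lemma heightN_eq {s : Finset ℤ} (hs : s.Nonempty) :
    heightN s = (s.max' hs - s.min' hs + 1).toNat := by
  rw [heightN, untop'_min hs, unbot'_max hs]

lemma min'_Icc {a b : ℤ} (h : a ≤ b) (hne : (Finset.Icc a b).Nonempty) :
    (Finset.Icc a b).min' hne = a := by
  apply le_antisymm
  · exact Finset.min'_le _ _ (by simp [h])
  · exact Finset.le_min' _ _ _ (fun y hy => (Finset.mem_Icc.mp hy).1)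

lemma max'_Icc {a b : ℤ} (h : a ≤ b) (hne : (Finset.Icc a b).Nonempty) :
    (Finset.Icc a b).max' hne = b := by
  apply le_antisymm
  · exact Finset.max'_le _ _ _ (fun y hy => (Finset.mem_Icc.mp hy).2)
  · exact Finset.le_max' _ _ (by simp [h])

lemma heightN_Icc {a b : ℤ} (h : a ≤ b) : heightN (Finset.Icc a b) = (b - a + 1).toNat := by
  have hne : (Finset.Icc a b).Nonempty := ⟨a, by simp [h]⟩
  rw [heightN_eq hne, min'_Icc h, max'_Icc h]

lemma card_of_convex {s : Finset ℤ} (hs : s.Nonempty) (h1 : numComponents s = 1) :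
    s.card = heightN s := by
  have h3 : s.card = (Finset.Icc (s.min' hs) (s.max' hs)).card := by
    rw [← col_eq_Icc hs h1]
  rw [h3, Int.card_Icc, heightN_eq hs]
  omega

lemma cc_mem {P : Finset Cell} (hcc : ColumnConvex P) {x y y' z : ℤ}
    (hy : (x, y) ∈ P) (hy' : (x, y') ∈ P) (h1 : y ≤ z) (h2 : z ≤ y') : (x, z) ∈ P := by
  have hne : (columnYs P x).Nonempty := ⟨y, mem_columnYs.mpr hy⟩
  have := mem_of_numComponents_one hne (hcc x hne)
    (le_trans (Finset.min'_le _ _ (mem_columnYs.mpr hy)) h1)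
    (le_trans h2 (Finset.le_max' _ _ (mem_columnYs.mpr hy')))
  exact mem_columnYs.mp this

end Basics2

section Connectivity

/-- The step relation of a polyomino. -/
def PRel (P : Finset Cell) : Cell → Cell → Prop :=
  fun u v => u ∈ P ∧ v ∈ P ∧ HexAdj u v

lemma pRel_symm {P : Finset Cell} : Symmetric (PRel P) :=
  fun _ _ h => ⟨h.2.1, h.1, hexAdj_symm h.2.2⟩

lemma conn_symm {P : Finset Cell} {a b : Cell}
    (h : Relation.ReflTransGen (PRel P) a b) : Relation.ReflTransGen (PRel P) b a :=
  by
    induction h with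
    | refl => exact Relation.ReflTransGen.refl
    | tail _ hbc ih => exact Relation.ReflTransGen.head (pRel_symm hbc) ih

lemma exists_coord (f : Cell → ℤ) (hf : ∀ a b : Cell, HexAdj a b → f b ≤ f a + 1)
    {P : Finset Cell} {a b : Cell} (hab : Relation.ReflTransGen (PRel P) a b)
    (haP : a ∈ P) {z : ℤ} (hz1 : f a ≤ z) : z ≤ f b → ∃ u ∈ P, f u = z := by
  induction hab with
  | refl => exact fun hz2 => ⟨a, haP, by omega⟩
  | @tail c b h1 h2 ih =>
    intro hz2
    by_cases h' : z ≤ f c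
    · exact ih h'
    · exact ⟨b, h2.2.1, by have := hf c b h2.2.2; omega⟩

lemma exists_crossing {P : Finset Cell} {a b : Cell}
    (hab : Relation.ReflTransGen (PRel P) a b) {z : ℤ} (hz1 : a.1 ≤ z) :
    z < b.1 → ∃ u ∈ P, ∃ v ∈ P, u.1 = z ∧ v.1 = z + 1 ∧ HexAdj u v := by
  induction hab with
  | refl => exact fun hz2 => absurd hz1 (by omega)
  | @tail c b h1 h2 ih =>
    intro hz2
    by_cases h' : z < c.1
    · exact ih h'
    · have hle := hexAdj_fst h2.2.2
      exact ⟨c, h2.1, b, h2.2.1, by omega, by omega, h2.2.2⟩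

/-- Connectivity within a convex column. -/
lemma conn_in_col {P : Finset Cell} (hcc : ColumnConvex P) {x y y' : ℤ}
    (h : (x, y) ∈ P) (hle : y ≤ y') :
    (x, y') ∈ P → Relation.ReflTransGen (PRel P) (x, y) (x, y') := by
  refine Int.le_induction (motive := fun n _ => (x, n) ∈ P → Relation.ReflTransGen (PRel P) (x, y) (x, n)) ?_ ?_ y' hle
  · exact fun _ => Relation.ReflTransGen.refl
  · intro n hn ih hmem
    have hn' : (x, n) ∈ P := cc_mem hcc h hmem hn (by omega)
    exact (ih hn').tail ⟨hn', hmem, hexAdj_up x n⟩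

lemma conn_in_col' {P : Finset Cell} (hcc : ColumnConvex P) {x y y' : ℤ}
    (h : (x, y) ∈ P) (h' : (x, y') ∈ P) :
    Relation.ReflTransGen (PRel P) (x, y) (x, y') := by
  rcases le_total y y' with hle | hle
  · exact conn_in_col hcc h hle h'
  · exact conn_symm (conn_in_col hcc h' hle h)

/-- Building a polyomino from convex columns: intervals + adjacency + abscissa
interval implies connectivity. -/
lemma poly_of_intervals {P : Finset Cell} (hne : P.Nonempty) (hcc : ColumnConvex P)
    (hadj : ∀ x : ℤ, (columnYs P x).Nonempty → (columnYs P (x + 1)).Nonempty →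
      ∃ y y' : ℤ, (x, y) ∈ P ∧ (x + 1, y') ∈ P ∧ HexAdj (x, y) (x + 1, y'))
    (hint : ∀ x x' z : ℤ, (columnYs P x).Nonempty → (columnYs P x').Nonempty →
      x ≤ z → z ≤ x' → (columnYs P z).Nonempty) :
    IsPolyomino P := by
  refine ⟨hne, ?_⟩
  have key : ∀ (d : ℕ) (x y y' : ℤ), (x, y) ∈ P → (x + d, y') ∈ P →
      Relation.ReflTransGen (PRel P) (x, y) (x + d, y') := by
    intro d
    induction d with
    | zero =>
      intro x y y' h h'
      simpa using conn_in_col' hcc h (by simpa using h')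
    | succ d ih =>
      intro x y y' h h'
      have hne1 : (columnYs P x).Nonempty := ⟨y, mem_columnYs.mpr h⟩
      have hne3 : (columnYs P (x + (d + 1 : ℕ))).Nonempty := ⟨y', mem_columnYs.mpr h'⟩
      have hne2 : (columnYs P (x + 1)).Nonempty :=
        hint x (x + (d + 1 : ℕ)) (x + 1) hne1 hne3 (by omega) (by push_cast; omega)
      obtain ⟨b0, b1, hb0, hb1, hadj01⟩ := hadj x hne1 hne2
      have c1 : Relation.ReflTransGen (PRel P) (x, y) (x, b0) := conn_in_col' hcc h hb0
      have c2 : Relation.ReflTransGen (PRel P) (x, b0) (x + 1, b1) :=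
        Relation.ReflTransGen.single ⟨hb0, hb1, hadj01⟩
      have c3 : Relation.ReflTransGen (PRel P) (x + 1, b1) (x + 1 + d, y') := by
        apply ih (x + 1) b1 y' hb1
        have : x + 1 + (d : ℤ) = x + ((d : ℕ) + 1 : ℕ) := by push_cast; omega
        rw [this]; exact h'
      have : x + 1 + (d : ℤ) = x + ((d : ℕ) + 1 : ℕ) := by push_cast; omega
      exact (c1.trans c2).trans (this ▸ c3)
  intro a ha b hb
  obtain ⟨ax, ay⟩ := a
  obtain ⟨bx, by'⟩ := b
  rcases le_total ax bx with hle | hle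
  · have : bx = ax + ((bx - ax).toNat : ℤ) := by omega
    exact this ▸ key (bx - ax).toNat ax ay by' ha (by rw [← this]; exact hb)
  · have : ax = bx + ((ax - bx).toNat : ℤ) := by omega
    exact conn_symm (this ▸ key (ax - bx).toNat bx by' ay hb (by rw [← this]; exact ha))

end Connectivity

section MaxX

lemma maxX_eq_max' {P : Finset Cell} (hne : P.Nonempty) :
    maxX P = (P.image Prod.fst).max' (hne.image _) := by
  rw [maxX, ← Finset.coe_max' (hne.image _)]
  rfl

lemma le_maxX {P : Finset Cell} (hne : P.Nonempty) {c : Cell} (hc : c ∈ P) :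
    c.1 ≤ maxX P := by
  rw [maxX_eq_max' hne]
  exact Finset.le_max' _ _ (Finset.mem_image_of_mem _ hc)

lemma exists_maxX {P : Finset Cell} (hne : P.Nonempty) : ∃ c ∈ P, c.1 = maxX P := by
  have := (P.image Prod.fst).max'_mem (hne.image _)
  rw [← maxX_eq_max' hne] at this
  obtain ⟨c, hc, hc2⟩ := Finset.mem_image.mp this
  exact ⟨c, hc, hc2⟩

lemma maxX_eq {P : Finset Cell} {x : ℤ} (h1 : ∀ c ∈ P, c.1 ≤ x) (h2 : ∃ c ∈ P, c.1 = x) :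
    maxX P = x := by
  obtain ⟨c, hc, rfl⟩ := h2
  have hne : P.Nonempty := ⟨c, hc⟩
  exact le_antisymm (by
    obtain ⟨d, hd, hd2⟩ := exists_maxX hne
    rw [← hd2]; exact h1 d hd) (le_maxX hne hc)

lemma col_nonempty_of_between {P : Finset Cell} (hP : IsPolyomino P) {c c' : Cell}
    (hc : c ∈ P) (hc' : c' ∈ P) {z : ℤ} (h1 : c.1 ≤ z) (h2 : z ≤ c'.1) :
    (columnYs P z).Nonempty := by
  obtain ⟨u, hu, hu2⟩ := exists_coord Prod.fst (fun a b h => (hexAdj_fst h).1)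
    (hP.2 c hc c' hc') hc h1 h2
  exact ⟨u.2, mem_columnYs.mpr (by rw [← hu2]; exact hu)⟩

/-- Adjacent nonempty columns of a polyomino contain adjacent cells. -/
lemma adj_cols {P : Finset Cell} (hP : IsPolyomino P) {x : ℤ}
    (h1 : (columnYs P x).Nonempty) (h2 : (columnYs P (x + 1)).Nonempty) :
    ∃ y y' : ℤ, (x, y) ∈ P ∧ (x + 1, y') ∈ P ∧ HexAdj (x, y) (x + 1, y') := by
  obtain ⟨y0, hy0⟩ := h1
  obtain ⟨y1, hy1⟩ := h2
  obtain ⟨u, hu, v, hv, hu1, hv1, hadj⟩ := exists_crossing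
    (hP.2 _ (mem_columnYs.mp hy0) _ (mem_columnYs.mp hy1)) (le_refl x) (by omega)
  refine ⟨u.2, v.2, ?_, ?_, ?_⟩
  · rw [← hu1]; exact hu
  · rw [← hv1]; exact hv
  · have : u = (x, u.2) := by rw [← hu1]
    have h2 : v = (x + 1, v.2) := by rw [← hv1]
    rw [← this, ← h2]; exact hadj

end MaxX

attribute [local instance] Classical.propDecidable

section Counting

lemma subset_box {P : Finset Cell} (hP : IsPolyomino P) (hN : Normalized P) {n : ℕ}
    (hcard : P.card = n) : P ⊆ Finset.Icc ((0 : ℤ), (0 : ℤ)) ((n : ℤ), (n : ℤ)) := by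
  intro c hc
  obtain ⟨hpos, ⟨c0, hc0, hc01⟩, ⟨c1, hc1, hc12⟩⟩ := hN
  have h1 : c.1 ≤ n := by
    have hsub : Finset.Icc (0 : ℤ) c.1 ⊆ P.image Prod.fst := by
      intro z hz
      rw [Finset.mem_Icc] at hz
      obtain ⟨u, hu, hu2⟩ := exists_coord Prod.fst (fun a b h => (hexAdj_fst h).1)
        (hP.2 c0 hc0 c hc) hc0 (by omega) hz.2
      exact Finset.mem_image.mpr ⟨u, hu, hu2⟩
    have := (Finset.card_le_card hsub).trans (Finset.card_image_le.trans (le_of_eq hcard))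
    rw [Int.card_Icc] at this
    have := (hpos c hc).1
    omega
  have h2 : c.2 ≤ n := by
    have hsub : Finset.Icc (0 : ℤ) c.2 ⊆ P.image Prod.snd := by
      intro z hz
      rw [Finset.mem_Icc] at hz
      obtain ⟨u, hu, hu2⟩ := exists_coord Prod.snd (fun a b h => (hexAdj_snd h).1)
        (hP.2 c1 hc1 c hc) hc1 (by omega) hz.2
      exact Finset.mem_image.mpr ⟨u, hu, hu2⟩
    have := (Finset.card_le_card hsub).trans (Finset.card_image_le.trans (le_of_eq hcard))
    rw [Int.card_Icc] at this
    have := (hpos c hc).2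
    omega
  rw [Finset.mem_Icc]
  exact ⟨⟨(hpos c hc).1, (hpos c hc).2⟩, ⟨h1, h2⟩⟩

/-- The finset of all normalized column-convex polyominoes of area `m`. -/
def ccSet (m : ℕ) : Finset (Finset Cell) :=
  (Finset.Icc ((0 : ℤ), (0 : ℤ)) ((m : ℤ), (m : ℤ))).powerset.filter
    (fun Q => IsPolyomino Q ∧ ColumnConvex Q ∧ Normalized Q ∧ Q.card = m)

lemma mem_ccSet {m : ℕ} {Q : Finset Cell} :
    Q ∈ ccSet m ↔ IsPolyomino Q ∧ ColumnConvex Q ∧ Normalized Q ∧ Q.card = m := by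
  simp only [ccSet, Finset.mem_filter, Finset.mem_powerset]
  exact ⟨fun h => h.2, fun h => ⟨subset_box h.1 h.2.2.1 h.2.2.2, h⟩⟩

lemma lastCol_nonempty {P : Finset Cell} (hne : P.Nonempty) : (lastCol P).Nonempty := by
  obtain ⟨c, hc, hc2⟩ := exists_maxX hne
  exact ⟨c.2, show c.2 ∈ columnYs P (maxX P) from
    mem_columnYs.mpr (show (maxX P, c.2) ∈ P by rw [← hc2]; exact hc)⟩

lemma ccCountHt_eq_filter (m j : ℕ) :
    ccCountHt m j = ((ccSet m).filter (fun Q => heightN (lastCol Q) = j)).card := by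
  rw [ccCountHt, ← Nat.card_eq_finsetCard]
  exact Nat.card_congr (Equiv.subtypeEquivRight (fun Q => by
    simp only [Finset.mem_filter, mem_ccSet]
    tauto))

lemma heightN_lastCol_le {m : ℕ} {Q : Finset Cell} (hQ : Q ∈ ccSet m) :
    heightN (lastCol Q) ≤ m := by
  obtain ⟨hP, hcc, hN, hcard⟩ := mem_ccSet.mp hQ
  have hne := lastCol_nonempty hP.1
  rw [← card_of_convex hne (hcc _ hne)]
  calc (lastCol Q).card ≤ (Q.filter (fun c => c.1 = maxX Q)).card := Finset.card_image_le
    _ ≤ Q.card := Finset.card_filter_le _ _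
    _ = m := hcard

lemma T2card (m : ℕ) :
    Nat.card {qc : Finset Cell × ℤ //
        (IsPolyomino qc.1 ∧ ColumnConvex qc.1 ∧ Normalized qc.1 ∧ qc.1.card = m) ∧
        qc.2 ∈ lastCol qc.1} =
      ∑ j ∈ Finset.range (m + 1), j * ccCountHt m j := by
  set E : Finset (Finset Cell × ℤ) :=
    (ccSet m).biUnion (fun Q => (lastCol Q).image (fun c => (Q, c))) with hE
  have hmemE : ∀ qc : Finset Cell × ℤ, qc ∈ E ↔ qc.1 ∈ ccSet m ∧ qc.2 ∈ lastCol qc.1 := by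
    rintro ⟨Q, c⟩
    simp only [hE, Finset.mem_biUnion, Finset.mem_image, Prod.mk.injEq]
    constructor
    · rintro ⟨Q', hQ', c', hc', rfl, rfl⟩; exact ⟨hQ', hc'⟩
    · rintro ⟨h1, h2⟩; exact ⟨Q, h1, c, h2, rfl, rfl⟩
  have hcardE : Nat.card {qc : Finset Cell × ℤ //
      (IsPolyomino qc.1 ∧ ColumnConvex qc.1 ∧ Normalized qc.1 ∧ qc.1.card = m) ∧
      qc.2 ∈ lastCol qc.1} = E.card := by
    rw [← Nat.card_eq_finsetCard]
    exact Nat.card_congr (Equiv.subtypeEquivRight (fun qc => by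
      rw [hmemE qc, mem_ccSet]))
  rw [hcardE, Finset.card_biUnion (by
    intro Q hQ Q' hQ' hne
    rw [Function.onFun, Finset.disjoint_left]
    rintro ⟨a, b⟩ h1 h2
    simp only [Finset.mem_image, Prod.mk.injEq] at h1 h2
    obtain ⟨c1, -, rfl, -⟩ := h1
    obtain ⟨c2, -, rfl, -⟩ := h2
    exact hne rfl)]
  have hstep : ∀ Q ∈ ccSet m, ((lastCol Q).image (fun c => (Q, c))).card =
      heightN (lastCol Q) := by
    intro Q hQ
    obtain ⟨hP, hcc, hN, hcard⟩ := mem_ccSet.mp hQ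
    have hne := lastCol_nonempty hP.1
    rw [Finset.card_image_of_injective _ (fun a b h => by simpa using h)]
    exact card_of_convex hne (hcc _ hne)
  rw [Finset.sum_congr rfl hstep]
  rw [← Finset.sum_fiberwise_of_maps_to (g := fun Q => heightN (lastCol Q))
    (t := Finset.range (m + 1))
    (fun Q hQ => Finset.mem_range.mpr (Nat.lt_succ_of_le (heightN_lastCol_le hQ)))]
  refine Finset.sum_congr rfl (fun j _ => ?_)
  rw [ccCountHt_eq_filter]
  rw [Finset.sum_congr rfl (fun Q hQ => (Finset.mem_filter.mp hQ).2), Finset.sum_const,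
    smul_eq_mul, mul_comm]

end Counting

section Bijection

/-- The defining property of the `γ` class. -/
def GammaP (n k : ℕ) (P : Finset Cell) : Prop :=
  IsPolyomino P ∧ ColumnConvex P ∧ Normalized P ∧
    P.card = n ∧ 2 ≤ (P.image Prod.fst).card ∧ heightN (lastCol P) = k ∧
    (maxX P, WithTop.untopD 0 (columnYs P (maxX P - 1)).min) ∉ P

/-- The defining property of column-convex normalized polyominoes. -/
def CCP (m : ℕ) (Q : Finset Cell) : Prop :=
  IsPolyomino Q ∧ ColumnConvex Q ∧ Normalized Q ∧ Q.card = m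

/-- Delete the last column, and record the ordinate just below its lowest cell. -/
def delC (P : Finset Cell) : Finset Cell × ℤ :=
  (P.filter (fun c => c.1 ≠ maxX P), WithTop.untopD 0 (lastCol P).min - 1)

/-- Glue a new column of height `k` to the right, starting just above ordinate `c`. -/
def addC (k : ℕ) (qc : Finset Cell × ℤ) : Finset Cell :=
  qc.1 ∪ (Finset.Icc (qc.2 + 1) (qc.2 + k)).image (fun y => (maxX qc.1 + 1, y))

lemma forward {n k : ℕ} {P : Finset Cell} (h : GammaP n k P) :
    (CCP (n - k) (delC P).1 ∧ (delC P).2 ∈ lastCol (delC P).1) ∧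
      addC k (delC P) = P ∧ 1 ≤ k ∧ k < n := by
  obtain ⟨hP, hcc, hN, hcard, h2col, hht, hpiv⟩ := h
  have hne : P.Nonempty := hP.1
  have hLne : (lastCol P).Nonempty := lastCol_nonempty hne
  set L := maxX P with hL
  set m := (lastCol P).min' hLne with hm
  set M := (lastCol P).max' hLne with hM
  have hmM : m ≤ M := Finset.min'_le _ _ (Finset.max'_mem _ _)
  have hIcc : lastCol P = Finset.Icc m M := col_eq_Icc hLne (hcc L hLne)
  have hk1 : M - m + 1 = (k : ℤ) := by
    rw [heightN_eq hLne] at hht; omega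
  have hk1' : 1 ≤ k := by omega
  obtain ⟨c0, hc0, hc00⟩ := hN.2.1
  have hL1 : 1 ≤ L := by
    by_contra hcon
    have hL0 : L = 0 := le_antisymm (by omega) (hc00 ▸ le_maxX hne hc0)
    have hsub : P.image Prod.fst ⊆ {0} := by
      intro z hz
      obtain ⟨c, hc, rfl⟩ := Finset.mem_image.mp hz
      have := le_maxX hne hc
      have := (hN.1 c hc).1
      simp only [Finset.mem_singleton]
      omega
    have := Finset.card_le_card hsub
    simp only [Finset.card_singleton] at this
    omega
  obtain ⟨cM, hcM, hcM2⟩ := exists_maxX hne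
  have hcol1ne : (columnYs P (L - 1)).Nonempty :=
    col_nonempty_of_between hP hc0 hcM (by omega) (by omega)
  set a := (columnYs P (L - 1)).min' hcol1ne with ha
  have haP : (L - 1, a) ∈ P := mem_columnYs.mp (Finset.min'_mem _ hcol1ne)
  have hLcol : (columnYs P (L - 1 + 1)).Nonempty := by
    have e : L - 1 + 1 = L := by omega
    rw [e]; exact hLne
  obtain ⟨y, y', hy, hy', hyadj⟩ := adj_cols hP hcol1ne hLcol
  have hstep : y' = y ∨ y' = y + 1 := hexAdj_step hyadj rfl
  have hy'M : y' ∈ lastCol P := by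
    have e : L - 1 + 1 = L := by omega
    exact mem_columnYs.mpr (by rw [← hL, ← e]; exact hy')
  have hay : a ≤ y := Finset.min'_le _ _ (mem_columnYs.mpr hy)
  have hy'le : y' ≤ M := Finset.le_max' _ _ hy'M
  have hmy' : m ≤ y' := Finset.min'_le _ _ hy'M
  have hpiv' : a ∉ lastCol P := by
    rw [untop'_min hcol1ne] at hpiv
    exact fun hmem => hpiv (mem_columnYs.mp hmem)
  have ham : a < m := by
    have h1 : ¬(m ≤ a ∧ a ≤ M) := fun hcon => hpiv' (hIcc ▸ Finset.mem_Icc.mpr hcon)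
    omega
  have hm1 : (L - 1, m - 1) ∈ P := cc_mem hcc haP hy (by omega) (by omega)
  have ha0 : 0 ≤ a := (hN.1 _ haP).2
  -- the rest of the polyomino
  set Q := P.filter (fun c => c.1 ≠ L) with hQdef
  have hQmem : ∀ c : Cell, c ∈ Q ↔ c ∈ P ∧ c.1 ≠ L := fun c => Finset.mem_filter
  have hQsub : Q ⊆ P := Finset.filter_subset _ _
  have hQcol : ∀ x, x ≠ L → columnYs Q x = columnYs P x := by
    intro x hx
    ext z
    rw [mem_columnYs, mem_columnYs, hQmem]
    exact ⟨fun hz => hz.1, fun hz => ⟨hz, hx⟩⟩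
  have hQcolne : ∀ x, (columnYs Q x).Nonempty → x ≠ L := by
    intro x hx hxe
    obtain ⟨z, hz⟩ := hx
    exact ((hQmem _).mp (mem_columnYs.mp hz)).2 hxe
  have hQa : (L - 1, a) ∈ Q := (hQmem _).mpr ⟨haP, by omega⟩
  have hQm1 : (L - 1, m - 1) ∈ Q := (hQmem _).mpr ⟨hm1, by omega⟩
  have hQne : Q.Nonempty := ⟨_, hQa⟩
  have hQmax : maxX Q = L - 1 := by
    apply maxX_eq
    · intro c hc
      have h1 := le_maxX hne (hQsub hc)
      have h2 := ((hQmem _).mp hc).2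
      omega
    · exact ⟨(L - 1, a), hQa, rfl⟩
  have hQcc : ColumnConvex Q := by
    intro x hx
    have hxL := hQcolne x hx
    rw [hQcol x hxL] at hx ⊢
    exact hcc x hx
  have hQN : Normalized Q := by
    refine ⟨fun c hc => hN.1 c (hQsub hc), ⟨c0, (hQmem _).mpr ⟨hc0, by omega⟩, hc00⟩, ?_⟩
    obtain ⟨c1, hc1, hc10⟩ := hN.2.2
    refine ⟨c1, (hQmem _).mpr ⟨hc1, fun hcl => ?_⟩, hc10⟩
    have : c1.2 ∈ lastCol P := mem_columnYs.mpr (by rw [← hL, ← hcl]; exact hc1)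
    have := Finset.min'_le _ _ this
    have := (hN.1 c1 hc1).2
    omega
  have hQpoly : IsPolyomino Q := by
    apply poly_of_intervals hQne hQcc
    · intro x h1 h2
      have hx1 := hQcolne x h1
      have hx2 := hQcolne (x + 1) h2
      rw [hQcol x hx1] at h1
      rw [hQcol (x + 1) hx2] at h2
      obtain ⟨z, z', hz, hz', hadj⟩ := adj_cols hP h1 h2
      exact ⟨z, z', (hQmem _).mpr ⟨hz, hx1⟩, (hQmem _).mpr ⟨hz', hx2⟩, hadj⟩
    · intro x x' z h1 h2 hle1 hle2
      obtain ⟨w, hw⟩ := h1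
      obtain ⟨w', hw'⟩ := h2
      have hwP : (x, w) ∈ P := hQsub (mem_columnYs.mp hw)
      have hw'P : (x', w') ∈ P := hQsub (mem_columnYs.mp hw')
      have hx'le : x' ≤ L - 1 := by
        have := le_maxX hne hw'P
        have := hQcolne x' ⟨w', hw'⟩
        omega
      have hzL : z ≠ L := by omega
      rw [hQcol z hzL]
      exact col_nonempty_of_between hP hwP hcM (le_of_eq rfl |>.trans hle1) (by omega)
  -- cardinality
  have hfiltercard : (P.filter (fun c => c.1 = L)).card = k := by
    have hinj : Set.InjOn Prod.snd ((P.filter (fun c => c.1 = L) : Finset Cell) : Set Cell) := by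
      intro u hu v hv huv
      simp only [Finset.coe_filter, Set.mem_setOf_eq] at hu hv
      exact Prod.ext (hu.2.trans hv.2.symm) huv
    have : (columnYs P L).card = (P.filter (fun c => c.1 = L)).card :=
      Finset.card_image_of_injOn hinj
    rw [← this]
    show (lastCol P).card = k
    rw [card_of_convex hLne (hcc L hLne)]; exact hht
  have hQcard : Q.card = n - k := by
    have hsplit : (P.filter (fun c => c.1 = L)).card + (P.filter (fun c => ¬c.1 = L)).card
        = P.card := Finset.card_filter_add_card_filter_not (p := fun c : Cell => c.1 = L)
    have : Q.card = (P.filter (fun c => ¬c.1 = L)).card := rfl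
    omega
  have hkn : k < n := by
    have h1 : 1 ≤ Q.card := Finset.card_pos.mpr hQne
    have hsplit : (P.filter (fun c => c.1 = L)).card + (P.filter (fun c => ¬c.1 = L)).card
        = P.card := Finset.card_filter_add_card_filter_not (p := fun c : Cell => c.1 = L)
    have : Q.card = (P.filter (fun c => ¬c.1 = L)).card := rfl
    omega
  -- assemble
  have hdel1 : (delC P).1 = Q := rfl
  have hdel2 : (delC P).2 = m - 1 := by
    show WithTop.untopD 0 (lastCol P).min - 1 = m - 1
    rw [untop'_min hLne]
  have hlastQ : lastCol Q = columnYs P (L - 1) := by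
    show columnYs Q (maxX Q) = _
    rw [hQmax, hQcol (L - 1) (by omega)]
  have hmem2 : (delC P).2 ∈ lastCol (delC P).1 := by
    rw [hdel1, hdel2, hlastQ]
    exact mem_columnYs.mpr hm1
  refine ⟨⟨⟨hQpoly, hQcc, hQN, hQcard⟩, hmem2⟩, ?_, hk1', hkn⟩
  -- addC k (delC P) = P
  have hdelPair : delC P = (Q, m - 1) := Prod.ext hdel1 hdel2
  rw [hdelPair]
  show Q ∪ (Finset.Icc (m - 1 + 1) (m - 1 + k)).image (fun y => (maxX Q + 1, y)) = P
  have e1 : m - 1 + 1 = m := by ring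
  have e2 : m - 1 + (k : ℤ) = M := by omega
  rw [e1, e2, hQmax]
  have e3 : L - 1 + 1 = L := by ring
  rw [e3]
  ext u
  simp only [Finset.mem_union, Finset.mem_image, Finset.mem_Icc]
  constructor
  · rintro (hu | ⟨z, hz, rfl⟩)
    · exact hQsub hu
    · exact mem_columnYs.mp (hIcc ▸ Finset.mem_Icc.mpr hz : z ∈ lastCol P)
  · intro hu
    by_cases hu1 : u.1 = L
    · refine Or.inr ⟨u.2, ?_, by rw [← hu1]⟩
      have : u.2 ∈ lastCol P := mem_columnYs.mpr (by rw [← hL, ← hu1]; exact hu)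
      rw [hIcc] at this
      exact Finset.mem_Icc.mp this
    · exact Or.inl ((hQmem _).mpr ⟨hu, hu1⟩)

end Bijection

section Backward

lemma backward {m k : ℕ} (hk : 1 ≤ k) {Q : Finset Cell} {c : ℤ}
    (hQ : CCP m Q) (hc : c ∈ lastCol Q) :
    GammaP (m + k) k (addC k (Q, c)) ∧ delC (addC k (Q, c)) = (Q, c) := by
  obtain ⟨hQpoly, hQcc, hQN, hQcard⟩ := hQ
  have hQne : Q.Nonempty := hQpoly.1
  set x' := maxX Q with hx'
  have hcQ : (x', c) ∈ Q := mem_columnYs.mp hc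
  have hc0 : 0 ≤ c := (hQN.1 _ hcQ).2
  have hx'0 : 0 ≤ x' := (hQN.1 _ hcQ).1
  set N := (Finset.Icc (c + 1) (c + (k : ℤ))).image (fun y => ((x' : ℤ) + 1, y)) with hNdef
  have hNmem : ∀ u : Cell, u ∈ N ↔ u.1 = x' + 1 ∧ c + 1 ≤ u.2 ∧ u.2 ≤ c + k := by
    intro u
    simp only [hNdef, Finset.mem_image, Finset.mem_Icc]
    constructor
    · rintro ⟨y, ⟨h1, h2⟩, rfl⟩; exact ⟨rfl, h1, h2⟩
    · rintro ⟨h1, h2, h3⟩; exact ⟨u.2, ⟨h2, h3⟩, by rw [← h1]⟩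
  have haddeq : addC k (Q, c) = Q ∪ N := rfl
  rw [haddeq]
  set P := Q ∪ N with hPdef
  have hPmem : ∀ u : Cell, u ∈ P ↔ u ∈ Q ∨ u ∈ N := fun u => Finset.mem_union
  have hQle : ∀ u ∈ Q, u.1 ≤ x' := fun u hu => le_maxX hQne hu
  have hN1 : ((x' : ℤ) + 1, c + 1) ∈ N := (hNmem _).mpr ⟨rfl, by omega, by omega⟩
  have hPne : P.Nonempty := ⟨_, (hPmem _).mpr (Or.inl hcQ)⟩
  have hPcol : ∀ x, x ≠ x' + 1 → columnYs P x = columnYs Q x := by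
    intro x hx
    ext z
    rw [mem_columnYs, mem_columnYs, hPmem]
    constructor
    · rintro (h | h)
      · exact h
      · exact absurd ((hNmem _).mp h).1 hx
    · exact Or.inl
  have hPcolL : columnYs P (x' + 1) = Finset.Icc (c + 1) (c + (k : ℤ)) := by
    ext z
    rw [mem_columnYs, hPmem, Finset.mem_Icc]
    constructor
    · rintro (h | h)
      · exact absurd (hQle _ h) (by omega)
      · have := (hNmem _).mp h; exact ⟨this.2.1, this.2.2⟩
    · intro h
      exact Or.inr ((hNmem _).mpr ⟨rfl, h.1, h.2⟩)
  have hPmax : maxX P = x' + 1 := by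
    apply maxX_eq
    · intro u hu
      rcases (hPmem _).mp hu with h | h
      · have := hQle u h; omega
      · exact le_of_eq ((hNmem _).mp h).1
    · exact ⟨_, (hPmem _).mpr (Or.inr hN1), rfl⟩
  have hPcc : ColumnConvex P := by
    intro x hx
    by_cases hxx : x = x' + 1
    · rw [hxx, hPcolL]
      exact numComponents_Icc (by omega)
    · rw [hPcol x hxx] at hx ⊢
      exact hQcc x hx
  obtain ⟨c0, hc0Q, hc00⟩ := hQN.2.1
  have hPpoly : IsPolyomino P := by
    apply poly_of_intervals hPne hPcc
    · intro x h1 h2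
      by_cases hx1 : x + 1 = x' + 1
      · have hxeq : x = x' := by omega
        subst hxeq
        exact ⟨c, c + 1, (hPmem _).mpr (Or.inl hcQ), (hPmem _).mpr (Or.inr hN1),
          hexAdj_diag x' c⟩
      · by_cases hx0 : x = x' + 1
        · exfalso
          rw [hPcol (x + 1) hx1] at h2
          obtain ⟨w, hw⟩ := h2
          have := hQle _ (mem_columnYs.mp hw)
          simp only at this
          omega
        · rw [hPcol x hx0] at h1
          rw [hPcol (x + 1) hx1] at h2
          obtain ⟨z, z', hz, hz', hadj⟩ := adj_cols hQpoly h1 h2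
          exact ⟨z, z', (hPmem _).mpr (Or.inl hz), (hPmem _).mpr (Or.inl hz'), hadj⟩
    · intro x x'' z h1 h2 hle1 hle2
      by_cases hz : z = x' + 1
      · rw [hz, hPcolL]
        exact ⟨c + 1, by simp; omega⟩
      · obtain ⟨w, hw⟩ := h1
        have hwP := mem_columnYs.mp hw
        have hx0 : 0 ≤ x := by
          rcases (hPmem _).mp hwP with h | h
          · exact (hQN.1 _ h).1
          · have := ((hNmem _).mp h).1; simp only at this; omega
        obtain ⟨w', hw'⟩ := h2
        have hw'P := mem_columnYs.mp hw'
        have hx''le : x'' ≤ x' + 1 := by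
          have := le_maxX hPne hw'P
          rw [hPmax] at this
          exact this
        have hzle : z ≤ x' := by omega
        rw [hPcol z hz]
        exact col_nonempty_of_between hQpoly hc0Q hcQ (by omega) (by omega)
  have hPN : Normalized P := by
    refine ⟨?_, ⟨c0, (hPmem _).mpr (Or.inl hc0Q), hc00⟩, ?_⟩
    · intro u hu
      rcases (hPmem _).mp hu with h | h
      · exact hQN.1 u h
      · have := (hNmem _).mp h; constructor <;> omega
    · obtain ⟨c1, hc1, hc10⟩ := hQN.2.2
      exact ⟨c1, (hPmem _).mpr (Or.inl hc1), hc10⟩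
  have hdisj : Disjoint Q N := by
    rw [Finset.disjoint_left]
    intro u hu hn
    have h1 := hQle u hu
    have h2 := ((hNmem _).mp hn).1
    omega
  have hNcard : N.card = k := by
    rw [hNdef, Finset.card_image_of_injective _ (fun a b h => by simpa using h),
      Int.card_Icc]
    omega
  have hPcard : P.card = m + k := by
    rw [hPdef, Finset.card_union_of_disjoint hdisj, hQcard, hNcard]
  have h2col : 2 ≤ (P.image Prod.fst).card := by
    refine Finset.one_lt_card.mpr ⟨0, ?_, x' + 1, ?_, by omega⟩
    · exact Finset.mem_image.mpr ⟨c0, (hPmem _).mpr (Or.inl hc0Q), hc00⟩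
    · exact Finset.mem_image.mpr ⟨_, (hPmem _).mpr (Or.inr hN1), rfl⟩
  have hheight : heightN (lastCol P) = k := by
    show heightN (columnYs P (maxX P)) = k
    rw [hPmax, hPcolL, heightN_Icc (by omega)]
    omega
  have hlastNe : (lastCol Q).Nonempty := ⟨c, hc⟩
  have hamin : (lastCol Q).min' hlastNe ≤ c := Finset.min'_le _ _ hc
  have ha0 : 0 ≤ (lastCol Q).min' hlastNe :=
    (hQN.1 _ (mem_columnYs.mp (Finset.min'_mem _ hlastNe))).2
  have hpivot : (maxX P, WithTop.untopD 0 (columnYs P (maxX P - 1)).min) ∉ P := by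
    rw [hPmax]
    have e1 : x' + 1 - 1 = x' := by ring
    rw [e1, hPcol x' (by omega)]
    have e2 : columnYs Q x' = lastCol Q := rfl
    rw [e2, untop'_min hlastNe]
    intro hmem
    rcases (hPmem _).mp hmem with h | h
    · have := hQle _ h; simp only at this; omega
    · have := (hNmem _).mp h
      simp only at this
      omega
  -- delC (addC) = (Q, c)
  have hdel : delC P = (Q, c) := by
    have hfst : (delC P).1 = Q := by
      show P.filter (fun u => u.1 ≠ maxX P) = Q
      rw [hPmax]
      ext u
      rw [Finset.mem_filter]
      constructor
      · rintro ⟨hu, hu1⟩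
        rcases (hPmem _).mp hu with h | h
        · exact h
        · exact absurd ((hNmem _).mp h).1 hu1
      · intro hu
        exact ⟨(hPmem _).mpr (Or.inl hu), by have := hQle u hu; omega⟩
    have hsnd : (delC P).2 = c := by
      show WithTop.untopD 0 (lastCol P).min - 1 = c
      have e3 : lastCol P = Finset.Icc (c + 1) (c + (k : ℤ)) := by
        show columnYs P (maxX P) = _
        rw [hPmax, hPcolL]
      rw [e3, untop'_min (Finset.nonempty_Icc.mpr (by omega)), min'_Icc (by omega)]
      ring
    exact Prod.ext hfst hsnd
  exact ⟨⟨hPpoly, hPcc, hPN, hPcard, h2col, hheight, hpivot⟩, hdel⟩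

end Backward

section Counts

lemma ccGammaCount_def (n k : ℕ) : ccGammaCount n k = Nat.card {P : Finset Cell // GammaP n k P} := rfl

lemma gammaCount_zero (n : ℕ) : ccGammaCount n 0 = 0 := by
  rw [ccGammaCount_def]
  have : IsEmpty {P : Finset Cell // GammaP n 0 P} :=
    ⟨fun ⟨P, hP⟩ => by have := (forward hP).2.2.1; omega⟩
  exact Nat.card_of_isEmpty

lemma gammaCount_big (n k : ℕ) (h : n ≤ k) : ccGammaCount n k = 0 := by
  rw [ccGammaCount_def]
  have : IsEmpty {P : Finset Cell // GammaP n k P} :=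
    ⟨fun ⟨P, hP⟩ => by have := (forward hP).2.2.2; omega⟩
  exact Nat.card_of_isEmpty

lemma gammaCount_eq (n k : ℕ) (hk : 1 ≤ k) (hkn : k < n) :
    ccGammaCount n k = ∑ j ∈ Finset.range (n - k + 1), j * ccCountHt (n - k) j := by
  rw [ccGammaCount_def, ← T2card (n - k)]
  apply Nat.card_congr
  refine Equiv.mk
    (fun P => ⟨delC P.1, (forward P.2).1⟩)
    (fun qc => ⟨addC k (qc.1.1, qc.1.2),
      by
        have := (backward hk qc.2.1 qc.2.2).1
        rwa [Nat.sub_add_cancel (le_of_lt hkn)] at this⟩)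
    ?_ ?_
  · rintro ⟨P, hP⟩
    apply Subtype.ext
    have h2 := (forward hP).2.1
    simpa using h2
  · rintro ⟨⟨Q, c⟩, h⟩
    apply Subtype.ext
    exact (backward hk h.1 h.2).2

/-- `bsum m` is the coefficient of `qᵐ` in `B₁`. -/
def bsum (m : ℕ) : ℕ := ∑ j ∈ Finset.range (m + 1), j * ccCountHt m j

lemma bsum_zero : bsum 0 = 0 := by simp [bsum]

lemma keyrec (n k : ℕ) (hk : k ≤ n) :
    ccGammaCount (n + 1) (k + 1) = ccGammaCount n k + (if k = 0 then bsum n else 0) := by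
  rcases Nat.eq_zero_or_pos k with rfl | hk1
  · simp only [if_pos rfl, gammaCount_zero, zero_add]
    rcases Nat.eq_zero_or_pos n with rfl | hn1
    · rw [gammaCount_big 1 1 le_rfl, bsum_zero]; simp
    · rw [gammaCount_eq (n + 1) 1 le_rfl (by omega)]
      simp [bsum]
  · simp only [if_neg (by omega : ¬ k = 0), add_zero]
    rcases eq_or_lt_of_le hk with rfl | hlt
    · rw [gammaCount_big (k + 1) (k + 1) le_rfl, gammaCount_big k k le_rfl]
    · rw [gammaCount_eq (n + 1) (k + 1) (by omega) (by omega),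
        gammaCount_eq n k (by omega) hlt, Nat.succ_sub_succ]

end Counts

section Final

lemma B1_coeff (n : ℕ) : PowerSeries.coeff n B1 = (bsum n : ℚ) := by
  rw [B1, PowerSeries.coeff_mk, Aser, PowerSeries.coeff_mk, map_sum,
    Polynomial.eval_finset_sum, bsum]
  push_cast
  apply Finset.sum_congr rfl
  intro j _
  rw [Polynomial.derivative_C_mul_X_pow, Polynomial.eval_mul, Polynomial.eval_C,
    Polynomial.eval_pow, Polynomial.eval_X, one_pow, mul_one]
  ring

/-- `(1 − qt)·A_γ = qt·B₁` in `(ℚ[t])⟦q⟧`. -/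
theorem stmt_11 :
    (1 - qp * tp) * Agamma = qp * tp * liftP B1 := by
  have hqt : ∀ (f : PowerSeries (Polynomial ℚ)) (n : ℕ),
      PowerSeries.coeff (n + 1) (qp * tp * f)
        = Polynomial.X * PowerSeries.coeff n f := by
    intro f n
    rw [qp, tp, mul_assoc, PowerSeries.coeff_succ_X_mul, PowerSeries.coeff_C_mul]
  have hqt0 : ∀ f : PowerSeries (Polynomial ℚ),
      PowerSeries.coeff 0 (qp * tp * f) = 0 := by
    intro f
    rw [qp, tp, mul_assoc, PowerSeries.coeff_zero_X_mul]
  ext n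
  rw [sub_mul, one_mul, map_sub]
  cases n with
  | zero =>
    rw [hqt0, hqt0]
    rw [Agamma, PowerSeries.coeff_mk]
    simp [gammaCount_big 0 0 le_rfl]
  | succ n =>
    rw [hqt, hqt]
    rw [Agamma, PowerSeries.coeff_mk, PowerSeries.coeff_mk]
    rw [liftP, PowerSeries.coeff_map, B1_coeff]
    rw [Finset.sum_range_succ'
      (fun k => Polynomial.C ((ccGammaCount (n + 1) k : ℚ)) * Polynomial.X ^ k) (n + 1)]
    rw [gammaCount_zero]
    have hterm : ∀ i ∈ Finset.range (n + 1),
        Polynomial.C ((ccGammaCount (n + 1) (i + 1) : ℚ)) * Polynomial.X ^ (i + 1)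
          = Polynomial.X * (Polynomial.C ((ccGammaCount n i : ℚ)) * Polynomial.X ^ i)
            + (if i = 0 then Polynomial.X * Polynomial.C ((bsum n : ℚ)) else 0) := by
      intro i hi
      rw [keyrec n i (Nat.lt_succ_iff.mp (Finset.mem_range.mp hi))]
      push_cast
      rcases eq_or_ne i 0 with rfl | h0
      · simp; ring
      · simp only [if_neg h0, add_zero]; ring
    rw [Finset.sum_congr rfl hterm, Finset.sum_add_distrib, ← Finset.mul_sum,
      Finset.sum_ite_eq' (Finset.range (n + 1)) 0]
    simp

end Final
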